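/- (Lemma 4(iii).) Under the stated assumptions, s2 < γ2/γ1 < s1. Equivalently, the cone D1 = {(x1,x2) ∈ (0,∞)² : x1 > s1·x2} is contained in U = {(x1,x2) ∈ (0,∞)² : γ2·x2 < γ1·x1} and the cone D2 = {(x1,x2) ∈ (0,∞)² : x1 < s2·x2} is contained in the complement of U in (0,∞)². -/

import Mathlib

set_option maxHeartbeats 1000000


/-- Lemma 4(iii): `s2 < γ2/γ1 < s1`; equivalently `D1 ⊆ U` and `D2 ⊆ (0,∞)² \ U`,
where `U = {(x1,x2) : γ2·x2 < γ1·x1}`. -/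
theorem cones_and_ray
    (p1 p2 : ℝ) (hp : p2 < p1)
    (κ1 κ2 : ℝ → ℝ)
    (hκ2conv : StrictConvexOn ℝ Set.univ κ2) (hκ2diff : Differentiable ℝ κ2)
    (hκ1 : ∀ θ, κ1 θ = κ2 θ + (p1 - p2) * θ)
    (hκ2zero : κ2 0 = 0)
    (γ1 γ2 : ℝ) (hγ2pos : 0 < γ2) (hγ : γ2 < γ1)
    (hγ1root : κ1 (-γ1) = 0) (hγ2root : κ2 (-γ2) = 0)
    (s1 s2 : ℝ)
    (hs1 : s1 = deriv κ1 (-γ1) / deriv κ2 (-γ1))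
    (hs2 : s2 = max 0 (deriv κ1 (-γ2) / deriv κ2 (-γ2)))
    (D1 D2 U : Set (ℝ × ℝ))
    (hD1 : D1 = {x | 0 < x.1 ∧ 0 < x.2 ∧ s1 * x.2 < x.1})
    (hD2 : D2 = {x | 0 < x.1 ∧ 0 < x.2 ∧ x.1 < s2 * x.2})
    (hU : U = {x | 0 < x.1 ∧ 0 < x.2 ∧ γ2 * x.2 < γ1 * x.1}) :
    s2 < γ2 / γ1 ∧ γ2 / γ1 < s1 ∧
    D1 ⊆ U ∧ D2 ⊆ {x : ℝ × ℝ | 0 < x.1 ∧ 0 < x.2} \ U := by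
  have hγ1pos : 0 < γ1 := hγ2pos.trans hγ
  set c : ℝ := p1 - p2 with hc
  have hcpos : 0 < c := sub_pos.mpr hp
  -- value of κ2 at -γ1
  have hκ2γ1 : κ2 (-γ1) = c * γ1 := by
    have := hκ1 (-γ1)
    rw [hγ1root] at this
    linarith [this]
  -- derivative of κ1
  have hderiv : ∀ x : ℝ, deriv κ1 x = deriv κ2 x + c := by
    intro x
    have hfun : κ1 = fun θ => κ2 θ + c * θ := funext hκ1
    have h : HasDerivAt (fun θ => κ2 θ + c * θ) (deriv κ2 x + c * 1) x :=
      (hκ2diff x).hasDerivAt.add ((hasDerivAt_id x).const_mul c)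
    rw [hfun, h.deriv, mul_one]
  set d1 : ℝ := deriv κ2 (-γ1) with hd1
  set d2 : ℝ := deriv κ2 (-γ2) with hd2
  -- strict convexity slope inequalities
  have hlt12 : (-γ1 : ℝ) < -γ2 := by linarith
  have hlt20 : (-γ2 : ℝ) < 0 := by linarith
  have hA : d1 < slope κ2 (-γ1) (-γ2) :=
    hκ2conv.deriv_lt_slope (Set.mem_univ _) (Set.mem_univ _) hlt12 (hκ2diff _)
  have hB : slope κ2 (-γ1) (-γ2) < d2 :=
    hκ2conv.slope_lt_deriv (Set.mem_univ _) (Set.mem_univ _) hlt12 (hκ2diff _)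
  have hC : d2 < slope κ2 (-γ2) 0 :=
    hκ2conv.deriv_lt_slope (Set.mem_univ _) (Set.mem_univ _) hlt20 (hκ2diff _)
  have hslope12 : slope κ2 (-γ1) (-γ2) = -(c * γ1) / (γ1 - γ2) := by
    rw [slope_def_field, hγ2root, hκ2γ1]
    ring_nf
  have hslope20 : slope κ2 (-γ2) 0 = 0 := by
    rw [slope_def_field, hγ2root, hκ2zero]
    simp
  have hd2neg : d2 < 0 := by rw [hslope20] at hC; exact hC
  have hden : (0:ℝ) < γ1 - γ2 := by linarith
  have hA' : d1 * (γ1 - γ2) < -(c * γ1) := by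
    rw [hslope12] at hA
    calc d1 * (γ1 - γ2) < (-(c * γ1) / (γ1 - γ2)) * (γ1 - γ2) := by
          exact mul_lt_mul_of_pos_right hA hden
      _ = -(c * γ1) := by field_simp
  have hB' : -(c * γ1) < d2 * (γ1 - γ2) := by
    rw [hslope12] at hB
    calc -(c * γ1) = (-(c * γ1) / (γ1 - γ2)) * (γ1 - γ2) := by field_simp
      _ < d2 * (γ1 - γ2) := mul_lt_mul_of_pos_right hB hden
  have hd1neg : d1 < 0 := by nlinarith
  -- the two key ratio inequalities
  have key1 : γ2 / γ1 < (d1 + c) / d1 := by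
    have hnum : (d1 + c) * γ1 - γ2 * d1 < 0 := by nlinarith
    have hdenn : d1 * γ1 < 0 := mul_neg_of_neg_of_pos hd1neg hγ1pos
    have hpos : 0 < ((d1 + c) * γ1 - γ2 * d1) / (d1 * γ1) :=
      div_pos_of_neg_of_neg hnum hdenn
    have heq : ((d1 + c) * γ1 - γ2 * d1) / (d1 * γ1) = (d1 + c) / d1 - γ2 / γ1 := by
      field_simp [hd1neg.ne, hγ1pos.ne']
    rw [heq] at hpos
    linarith
  have key2 : (d2 + c) / d2 < γ2 / γ1 := by
    have hnum : γ2 * d2 - (d2 + c) * γ1 < 0 := by nlinarith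
    have hdenn : d2 * γ1 < 0 := mul_neg_of_neg_of_pos hd2neg hγ1pos
    have hpos : 0 < (γ2 * d2 - (d2 + c) * γ1) / (d2 * γ1) :=
      div_pos_of_neg_of_neg hnum hdenn
    have heq : (γ2 * d2 - (d2 + c) * γ1) / (d2 * γ1) = γ2 / γ1 - (d2 + c) / d2 := by
      field_simp [hd2neg.ne, hγ1pos.ne']
    rw [heq] at hpos
    linarith
  have hs1' : s1 = (d1 + c) / d1 := by rw [hs1, hderiv]
  have hs2' : s2 = max 0 ((d2 + c) / d2) := by rw [hs2, hderiv]
  have hratio_pos : 0 < γ2 / γ1 := div_pos hγ2pos hγ1pos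
  have h1 : s2 < γ2 / γ1 := by
    rw [hs2']
    exact max_lt hratio_pos key2
  have h2 : γ2 / γ1 < s1 := by rw [hs1']; exact key1
  refine ⟨h1, h2, ?_, ?_⟩
  · intro x hx
    rw [hD1] at hx
    rw [hU]
    obtain ⟨hx1, hx2, hx3⟩ := hx
    refine ⟨hx1, hx2, ?_⟩
    have : γ2 < s1 * γ1 := by
      have := (div_lt_iff₀ hγ1pos).mp h2
      linarith
    nlinarith [mul_lt_mul_of_pos_right this hx2, mul_lt_mul_of_pos_left hx3 hγ1pos]
  · intro x hx
    rw [hD2] at hx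
    obtain ⟨hx1, hx2, hx3⟩ := hx
    refine ⟨⟨hx1, hx2⟩, ?_⟩
    rw [hU]
    intro hmem
    obtain ⟨-, -, hlt⟩ := hmem
    have hs2γ : s2 * γ1 < γ2 := (lt_div_iff₀ hγ1pos).mp h1
    nlinarith [mul_lt_mul_of_pos_right hs2γ hx2, mul_lt_mul_of_pos_left hx3 hγ1pos]
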